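/- Let A be an invertible n×n real matrix, 1 < p < ∞, and let w be a weight on ℝ^n. Then w ∈ 𝒜_{A,p} ∩ 𝒜_{A^{−1},p} if and only if w belongs to the Muckenhoupt class A_p and w_A ∼ w, i.e., there exist constants 0 < c_1 ≤ c_2 such that c_1 w(x) ≤ w(Ax) ≤ c_2 w(x) for almost every x ∈ ℝ^n. -/

import Mathlib

open MeasureTheory Set ENNReal

namespace Paper

/-- An axis-parallel (half-open) cube in `ℝⁿ`. -/
structure Cube (n : ℕ) where
  corner : Fin n → ℝ
  side : ℝ
  side_pos : 0 < side

namespace Cube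

variable {n : ℕ}

/-- The underlying set of a cube. -/
def set (Q : Cube n) : Set (Fin n → ℝ) :=
  {x | ∀ i, Q.corner i ≤ x i ∧ x i < Q.corner i + Q.side}

/-- The volume `|Q| = side ^ n` of a cube. -/
noncomputable def vol (Q : Cube n) : ℝ := Q.side ^ n

/-- The concentric dilate `λQ` of a cube (same center, side multiplied by `l > 0`). -/
noncomputable def dilate (Q : Cube n) (l : ℝ) (hl : 0 < l) : Cube n :=
  ⟨fun i => Q.corner i + Q.side / 2 - l * Q.side / 2, l * Q.side, mul_pos hl Q.side_pos⟩

/-- The concentric triple `3Q` of a cube. -/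
noncomputable def tri (Q : Cube n) : Cube n :=
  ⟨fun i => Q.corner i - Q.side, 3 * Q.side, by have := Q.side_pos; linarith⟩

end Cube

variable {n : ℕ}

/-- The conjugate exponent `p' = p/(p-1)`. -/
noncomputable def conj (p : ℝ) : ℝ := p / (p - 1)

/-- The Euclidean length of a vector of `Fin n → ℝ`. -/
noncomputable def elen (x : Fin n → ℝ) : ℝ := Real.sqrt (∑ i, x i ^ 2)

/-- The (extended-real valued) weighted norm `‖f‖_{L^p(u)} = (∫ |f|^p u)^{1/p}`. -/
noncomputable def lpNorm (p : ℝ) (u f : (Fin n → ℝ) → ℝ) : ℝ≥0∞ :=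
  (∫⁻ x, ENNReal.ofReal (|f x| ^ p * u x)) ^ (1 / p)

/-- Membership `f ∈ L^p(u)` for a weight `u`. -/
def MemLpW (p : ℝ) (u f : (Fin n → ℝ) → ℝ) : Prop :=
  Measurable f ∧ lpNorm p u f < ⊤

/-- The fractional maximal operator
`M_α f(x) = sup_{Q ∋ x} |Q|^{α/n-1} ∫_Q |f|`. -/
noncomputable def frMax (α : ℝ) (f : (Fin n → ℝ) → ℝ) (x : Fin n → ℝ) : ℝ≥0∞ :=
  ⨆ Q : {Q : Cube n // x ∈ Q.set},
    ENNReal.ofReal (Q.1.vol ^ (α / n - 1)) * ∫⁻ y in Q.1.set, ENNReal.ofReal |f y|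

/-- The maximal operator `M_{α,s} f(x) = sup_{Q ∋ x} |Q|^{α/n} ((1/|Q|)∫_Q |f|^s)^{1/s}`. -/
noncomputable def frMaxS (α s : ℝ) (f : (Fin n → ℝ) → ℝ) (x : Fin n → ℝ) : ℝ≥0∞ :=
  ⨆ Q : {Q : Cube n // x ∈ Q.set},
    ENNReal.ofReal (Q.1.vol ^ (α / n)) *
      ((ENNReal.ofReal Q.1.vol)⁻¹ * ∫⁻ y in Q.1.set, ENNReal.ofReal (|f y| ^ s)) ^ (1 / s)

/-- The quantity whose supremum over all cubes is `[w]_{𝒜_{A,p,q}}`; for `p = 1`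
the second factor is `‖w⁻¹‖_{L^∞(Q)}`. -/
noncomputable def apqE (A : Matrix (Fin n) (Fin n) ℝ) (p q : ℝ)
    (w : (Fin n → ℝ) → ℝ) (Q : Cube n) : ℝ≥0∞ :=
  ((ENNReal.ofReal Q.vol)⁻¹ * ∫⁻ x in Q.set, ENNReal.ofReal (w (A.mulVec x)) ^ q) ^ (1 / q) *
    (if p = 1 then essSup (fun x => (ENNReal.ofReal (w x))⁻¹) (volume.restrict Q.set)
     else ((ENNReal.ofReal Q.vol)⁻¹ *
        ∫⁻ x in Q.set, ENNReal.ofReal (w x) ^ (-conj p)) ^ (1 / conj p))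

/-- The constant `[w]_{𝒜_{A,p,q}}`. -/
noncomputable def apqConst (A : Matrix (Fin n) (Fin n) ℝ) (p q : ℝ)
    (w : (Fin n → ℝ) → ℝ) : ℝ≥0∞ :=
  ⨆ Q : Cube n, apqE A p q w Q

/-- Membership in the class `𝒜_{A,p,q}`. -/
def MemApq (A : Matrix (Fin n) (Fin n) ℝ) (p q : ℝ) (w : (Fin n → ℝ) → ℝ) : Prop :=
  apqConst A p q w < ⊤

/-- The quantity whose supremum over all cubes is `[w]_{𝒜_{A,p}}`; for `p = 1` the
second factor is `‖w⁻¹‖_{L^∞(Q)}`. -/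
noncomputable def apE (A : Matrix (Fin n) (Fin n) ℝ) (p : ℝ)
    (w : (Fin n → ℝ) → ℝ) (Q : Cube n) : ℝ≥0∞ :=
  ((ENNReal.ofReal Q.vol)⁻¹ * ∫⁻ x in Q.set, ENNReal.ofReal (w (A.mulVec x))) *
    (if p = 1 then essSup (fun x => (ENNReal.ofReal (w x))⁻¹) (volume.restrict Q.set)
     else ((ENNReal.ofReal Q.vol)⁻¹ *
        ∫⁻ x in Q.set, ENNReal.ofReal (w x) ^ (1 - conj p)) ^ (p - 1))

/-- The constant `[w]_{𝒜_{A,p}}`. -/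
noncomputable def apConst (A : Matrix (Fin n) (Fin n) ℝ) (p : ℝ)
    (w : (Fin n → ℝ) → ℝ) : ℝ≥0∞ :=
  ⨆ Q : Cube n, apE A p w Q

/-- Membership in the class `𝒜_{A,p}`. -/
def MemAp (A : Matrix (Fin n) (Fin n) ℝ) (p : ℝ) (w : (Fin n → ℝ) → ℝ) : Prop :=
  apConst A p w < ⊤

/-- The quantity `v(Q)^{-1/p} (∫_Q M_α(χ_Q v)^q u)^{1/q}` whose supremum over all
cubes is the Sawyer testing constant `[u,v]_{ℳ_{α,p,q}}`. -/
noncomputable def sawyerE (α p q : ℝ) (u v : (Fin n → ℝ) → ℝ) (Q : Cube n) : ℝ≥0∞ :=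
  ((∫⁻ x in Q.set, ENNReal.ofReal (v x)) ^ (1 / p))⁻¹ *
    (∫⁻ x in Q.set, (frMax α (Q.set.indicator v) x) ^ q * ENNReal.ofReal (u x)) ^ (1 / q)

/-- The Sawyer testing constant `[u,v]_{ℳ_{α,p,q}}`. -/
noncomputable def sawyerConst (α p q : ℝ) (u v : (Fin n → ℝ) → ℝ) : ℝ≥0∞ :=
  ⨆ Q : Cube n, sawyerE α p q u v Q

/-- Membership of a pair of weights in the Sawyer class `ℳ_{α,p,q}`. -/
def MemSawyer (α p q : ℝ) (u v : (Fin n → ℝ) → ℝ) : Prop :=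
  sawyerConst α p q u v < ⊤

/-- The averaged norm `‖g‖_{r,|x|∼t}` over the annulus `t < |x| ≤ 2t`
(essential supremum when `r = ∞`). -/
noncomputable def annNorm (r : ℝ≥0∞) (g : (Fin n → ℝ) → ℝ) (t : ℝ) : ℝ≥0∞ :=
  if r = ⊤ then
    essSup (fun x => ENNReal.ofReal |g x|)
      (volume.restrict {x | t < elen x ∧ elen x ≤ 2 * t})
  else
    ((volume {x : Fin n → ℝ | elen x < 2 * t})⁻¹ *
      ∫⁻ x in {x | t < elen x ∧ elen x ≤ 2 * t}, ENNReal.ofReal (|g x| ^ r.toReal)) ^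
        (1 / r.toReal)

/-- The fractional size condition `K ∈ S_{β,r}`. -/
def SizeCond (β : ℝ) (r : ℝ≥0∞) (K : (Fin n → ℝ) → ℝ) : Prop :=
  ∃ C : ℝ, 0 < C ∧ ∀ t : ℝ, 0 < t →
    annNorm r K t ≤ ENNReal.ofReal (C * t ^ (β - n))

/-- The generalized fractional Hörmander condition `K ∈ H_{β,r}`. -/
def HormCond (β : ℝ) (r : ℝ≥0∞) (K : (Fin n → ℝ) → ℝ) : Prop :=
  ∃ c : ℝ, 1 < c ∧ ∃ C : ℝ, 0 < C ∧ ∀ x : Fin n → ℝ, ∀ R : ℝ, c * elen x < R →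
    (∑' m : ℕ, ENNReal.ofReal (((2 : ℝ) ^ (m + 1) * R) ^ ((n : ℝ) - β)) *
      annNorm r (fun y => K (y - x) - K y) (2 ^ (m + 1) * R)) ≤ ENNReal.ofReal C

/-- The integral operator `T_{α,m} f(x) = ∫ k_1(x-A_1y) ⋯ k_m(x-A_my) f(y) dy`. -/
noncomputable def intOp (m : ℕ) (k : Fin m → (Fin n → ℝ) → ℝ)
    (A : Fin m → Matrix (Fin n) (Fin n) ℝ) (f : (Fin n → ℝ) → ℝ) (x : Fin n → ℝ) : ℝ :=
  ∫ y, (∏ i, k i (x - (A i).mulVec y)) * f y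

/-- Hypothesis (H): the matrices `A i` and `A i - A j` (`i ≠ j`) are invertible. -/
def HypH (m : ℕ) (A : Fin m → Matrix (Fin n) (Fin n) ℝ) : Prop :=
  (∀ i, (A i).det ≠ 0) ∧ ∀ i j, i ≠ j → (A i - A j).det ≠ 0

/-- `T` is of strong type `(p,p)` (with respect to Lebesgue measure). -/
def StrongType (p : ℝ) (T : ((Fin n → ℝ) → ℝ) → (Fin n → ℝ) → ℝ) : Prop :=
  ∃ C : ℝ, 0 < C ∧ ∀ f : (Fin n → ℝ) → ℝ, Measurable f →
    lpNorm p (fun _ => 1) (T f) ≤ ENNReal.ofReal C * lpNorm p (fun _ => 1) f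

/-- Bounded, measurable and compactly supported functions. -/
def BddCompactSupp (f : (Fin n → ℝ) → ℝ) : Prop :=
  Measurable f ∧ (∃ M : ℝ, ∀ x, |f x| ≤ M) ∧ HasCompactSupport f

/-- A dyadic lattice: any two cubes are nested or disjoint, every cube is the union of
its children (the cubes of the family of half its side length contained in it), and
every cube has a parent of twice its side length. -/
def IsDyadicLattice (𝒟 : Set (Cube n)) : Prop :=
  (∀ Q ∈ 𝒟, ∀ Q' ∈ 𝒟, Q.set ⊆ Q'.set ∨ Q'.set ⊆ Q.set ∨ Disjoint Q.set Q'.set) ∧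
  (∀ Q ∈ 𝒟, (⋃ P ∈ {P | P ∈ 𝒟 ∧ P.side = Q.side / 2 ∧ P.set ⊆ Q.set}, P.set) = Q.set) ∧
  (∀ Q ∈ 𝒟, ∃ Q' ∈ 𝒟, Q'.side = 2 * Q.side ∧ Q.set ⊆ Q'.set)

/-- An `η`-sparse family of cubes. -/
def IsSparse (η : ℝ) (𝒮 : Set (Cube n)) : Prop :=
  ∃ E : Cube n → Set (Fin n → ℝ),
    (∀ Q ∈ 𝒮, E Q ⊆ Q.set ∧ MeasurableSet (E Q) ∧ ENNReal.ofReal (η * Q.vol) ≤ volume (E Q)) ∧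
    𝒮.PairwiseDisjoint E

/-- The sparse operator `𝒜_{α,s,𝒮} f(x) = Σ_{Q ∈ 𝒮} |Q|^{α/n} (avg_Q |f|^s)^{1/s} χ_Q(x)`. -/
noncomputable def sparseOp (α s : ℝ) (𝒮 : Set (Cube n)) (f : (Fin n → ℝ) → ℝ)
    (x : Fin n → ℝ) : ℝ≥0∞ :=
  ∑' Q : 𝒮, Set.indicator (Q : Cube n).set
    (fun _ => ENNReal.ofReal ((Q : Cube n).vol ^ (α / n)) *
      ((ENNReal.ofReal (Q : Cube n).vol)⁻¹ *
        ∫⁻ y in (Q : Cube n).set, ENNReal.ofReal (|f y| ^ s)) ^ (1 / s)) x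

/-- The quantity whose sup over `R ∈ 𝒟` is the outer testing constant `𝒯_{A,r,out,𝒟}`. -/
noncomputable def testOutE (α p q r : ℝ) (𝒟 : Set (Cube n))
    (A : Matrix (Fin n) (Fin n) ℝ) (u v : (Fin n → ℝ) → ℝ) (R : Cube n) : ℝ≥0∞ :=
  ((∫⁻ x in R.set, ENNReal.ofReal (v x)) ^ (1 / p))⁻¹ *
    (∫⁻ x, (∑' Q : {Q : Cube n // Q ∈ 𝒟 ∧ R.set ⊆ Q.set},
        Set.indicator Q.1.set (fun _ =>
          ENNReal.ofReal (Q.1.vol ^ (α / n - 1 / r)) *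
            (∫⁻ y in Q.1.set, ENNReal.ofReal (R.set.indicator v y)) ^ (1 / r)) x) ^ q *
      ENNReal.ofReal (u (A.mulVec x))) ^ (1 / q)

/-- The quantity whose sup over `R ∈ 𝒟` is the dual outer testing constant `𝒯*_{A,r,out,𝒟}`. -/
noncomputable def testOutStarE (α p q r : ℝ) (𝒟 : Set (Cube n))
    (A : Matrix (Fin n) (Fin n) ℝ) (u v : (Fin n → ℝ) → ℝ) (R : Cube n) : ℝ≥0∞ :=
  ((∫⁻ x in R.set, ENNReal.ofReal (u (A.mulVec x))) ^ (1 / conj q))⁻¹ *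
    (∫⁻ x, (∑' Q : {Q : Cube n // Q ∈ 𝒟 ∧ R.set ⊆ Q.set},
        Set.indicator Q.1.set (fun _ =>
          ENNReal.ofReal (Q.1.vol ^ (α / n - 1 / r)) *
            (∫⁻ y in Q.1.set, ENNReal.ofReal (v y)) ^ (1 / r - 1) *
            (∫⁻ y in Q.1.set, ENNReal.ofReal (R.set.indicator
              (fun z => u (A.mulVec z)) y))) x) ^ conj p *
      ENNReal.ofReal (v x)) ^ (1 / conj p)

/-- The outer testing constant `𝒯_{A,r,out,𝒟}`. -/
noncomputable def testOutConst (α p q r : ℝ) (𝒟 : Set (Cube n))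
    (A : Matrix (Fin n) (Fin n) ℝ) (u v : (Fin n → ℝ) → ℝ) : ℝ≥0∞ :=
  ⨆ R : 𝒟, testOutE α p q r 𝒟 A u v R

/-- The dual outer testing constant `𝒯*_{A,r,out,𝒟}`. -/
noncomputable def testOutStarConst (α p q r : ℝ) (𝒟 : Set (Cube n))
    (A : Matrix (Fin n) (Fin n) ℝ) (u v : (Fin n → ℝ) → ℝ) : ℝ≥0∞ :=
  ⨆ R : 𝒟, testOutStarE α p q r 𝒟 A u v R

/-- The grand maximal truncated operator `M_T` (for `m = 2`). -/
noncomputable def grandMax (T : ((Fin n → ℝ) → ℝ) → (Fin n → ℝ) → ℝ)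
    (A1 A2 : Matrix (Fin n) (Fin n) ℝ) (f : (Fin n → ℝ) → ℝ) (x : Fin n → ℝ) : ℝ≥0∞ :=
  ⨆ P : {P : Cube n × Cube n // A1⁻¹.mulVec x ∈ P.1.set ∧ A2⁻¹.mulVec x ∈ P.2.set},
    essSup (fun ξ => ENNReal.ofReal
        |T (Set.indicator ((P.1.1.tri.set ∪ P.1.2.tri.set)ᶜ) f) ξ|)
      (volume.restrict (P.1.1.set ∪ P.1.2.set))

/-- The local grand maximal truncated operator `M_{T,Q₀¹∪Q₀²}` (for `m = 2`). -/
noncomputable def locGrandMax (T : ((Fin n → ℝ) → ℝ) → (Fin n → ℝ) → ℝ)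
    (A1 A2 : Matrix (Fin n) (Fin n) ℝ) (Q01 Q02 : Cube n)
    (f : (Fin n → ℝ) → ℝ) (x : Fin n → ℝ) : ℝ≥0∞ :=
  ⨆ P : {P : Cube n × Cube n // (A1⁻¹.mulVec x ∈ P.1.set ∧ Q01.set ⊆ P.1.set) ∧
      (A2⁻¹.mulVec x ∈ P.2.set ∧ Q02.set ⊆ P.2.set)},
    essSup (fun ξ => ENNReal.ofReal
        |T (Set.indicator ((Q01.tri.set ∪ Q02.tri.set) \ (P.1.1.tri.set ∪ P.1.2.tri.set)) f) ξ|)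
      (volume.restrict (P.1.1.set ∪ P.1.2.set))

section Aux

open Filter Metric

variable {n : ℕ}

lemma Cube.set_eq' (Q : Cube n) :
    Q.set = Set.univ.pi fun i => Set.Ico (Q.corner i) (Q.corner i + Q.side) := by
  ext x; simp [Cube.set, Set.mem_pi, Set.mem_Ico]

lemma Cube.measurableSet' (Q : Cube n) : MeasurableSet Q.set := by
  rw [Cube.set_eq']; exact MeasurableSet.univ_pi fun i => measurableSet_Ico

lemma Cube.vol_pos (Q : Cube n) : 0 < Q.vol := pow_pos Q.side_pos n

lemma Cube.volume_set' (Q : Cube n) : volume Q.set = ENNReal.ofReal Q.vol := by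
  rw [Cube.set_eq', volume_pi_pi]
  simp [Real.volume_Ico, Cube.vol, ← ENNReal.ofReal_pow Q.side_pos.le]

lemma aux_qmp (B : Matrix (Fin n) (Fin n) ℝ) (hB : B.det ≠ 0) :
    MeasureTheory.Measure.QuasiMeasurePreserving (B.mulVec)
      (volume : MeasureTheory.Measure (Fin n → ℝ)) volume := by
  have hc : Continuous (B.mulVec) := by
    have := LinearMap.continuous_on_pi (Matrix.toLin' B)
    convert this using 1; ext x; simp [Matrix.toLin'_apply]
  refine ⟨hc.measurable, ?_⟩
  have hmap : MeasureTheory.Measure.map (B.mulVec) (volume : MeasureTheory.Measure (Fin n → ℝ))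
      = ENNReal.ofReal |B.det⁻¹| • volume := by
    have := Real.map_matrix_volume_pi_eq_smul_volume_pi hB
    have he : ⇑(Matrix.toLin' B) = B.mulVec := by ext x; simp [Matrix.toLin'_apply]
    rwa [he] at this
  rw [hmap]
  exact MeasureTheory.Measure.absolutelyContinuous_of_le_smul le_rfl

lemma aux_measurable_mulVec (B : Matrix (Fin n) (Fin n) ℝ) :
    Measurable (B.mulVec : (Fin n → ℝ) → (Fin n → ℝ)) := by
  have hc : Continuous (B.mulVec) := by
    have := LinearMap.continuous_on_pi (Matrix.toLin' B)
    convert this using 1; ext x; simp [Matrix.toLin'_apply]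
  exact hc.measurable

lemma aux_ae_comp_inv (B : Matrix (Fin n) (Fin n) ℝ) (hB : B.det ≠ 0)
    {P : (Fin n → ℝ) → Prop}
    (h : ∀ᵐ x ∂(volume : MeasureTheory.Measure (Fin n → ℝ)), P (B.mulVec x)) :
    ∀ᵐ y ∂(volume : MeasureTheory.Measure (Fin n → ℝ)), P y := by
  have hB' : IsUnit B.det := isUnit_iff_ne_zero.mpr hB
  have hBinv : (B⁻¹).det ≠ 0 := (Matrix.isUnit_nonsing_inv_det B hB').ne_zero
  have := (aux_qmp B⁻¹ hBinv).ae (p := fun x => P (B.mulVec x)) h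
  refine this.mono fun y hy => ?_
  simp only [Matrix.mulVec_mulVec, Matrix.mul_nonsing_inv B hB', Matrix.one_mulVec] at hy
  exact hy

lemma aux_conj_lemma {p : ℝ} (hp : 1 < p) : (1 - conj p) * (p - 1) = -1 := by
  have h1 : p - 1 ≠ 0 := by linarith
  rw [conj, sub_mul, div_mul_cancel₀ p h1]; ring

end Aux
section Aux2

open Filter Metric

variable {n : ℕ}

lemma aux_apE_eq {p : ℝ} (hp : 1 < p) (B : Matrix (Fin n) (Fin n) ℝ)
    (w : (Fin n → ℝ) → ℝ) (Q : Cube n) :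
    apE B p w Q =
      ((ENNReal.ofReal Q.vol)⁻¹ * ∫⁻ x in Q.set, ENNReal.ofReal (w (B.mulVec x))) *
        (((ENNReal.ofReal Q.vol)⁻¹ *
          ∫⁻ x in Q.set, ENNReal.ofReal (w x) ^ (1 - conj p)) ^ (p - 1)) := by
  have : p ≠ 1 := by linarith
  simp [apE, this]

lemma aux_apE_le_apConst (B : Matrix (Fin n) (Fin n) ℝ) (p : ℝ)
    (w : (Fin n → ℝ) → ℝ) (Q : Cube n) : apE B p w Q ≤ apConst B p w :=
  le_iSup (fun Q => apE B p w Q) Q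

lemma aux_apConst_mono {p : ℝ} (hp : 1 < p) (B B' : Matrix (Fin n) (Fin n) ℝ)
    (w : (Fin n → ℝ) → ℝ) (C : ℝ≥0∞) (hC : C ≠ ⊤)
    (h : ∀ᵐ x ∂(volume : Measure (Fin n → ℝ)),
      ENNReal.ofReal (w (B.mulVec x)) ≤ C * ENNReal.ofReal (w (B'.mulVec x))) :
    apConst B p w ≤ C * apConst B' p w := by
  refine iSup_le fun Q => ?_
  have h1 : (∫⁻ x in Q.set, ENNReal.ofReal (w (B.mulVec x)))
      ≤ C * ∫⁻ x in Q.set, ENNReal.ofReal (w (B'.mulVec x)) := by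
    rw [← lintegral_const_mul' _ _ hC]
    exact lintegral_mono_ae (ae_restrict_of_ae h)
  rw [aux_apE_eq hp]
  calc ((ENNReal.ofReal Q.vol)⁻¹ * ∫⁻ x in Q.set, ENNReal.ofReal (w (B.mulVec x))) *
        (((ENNReal.ofReal Q.vol)⁻¹ *
          ∫⁻ x in Q.set, ENNReal.ofReal (w x) ^ (1 - conj p)) ^ (p - 1))
      ≤ ((ENNReal.ofReal Q.vol)⁻¹ * (C * ∫⁻ x in Q.set, ENNReal.ofReal (w (B'.mulVec x)))) *
        (((ENNReal.ofReal Q.vol)⁻¹ *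
          ∫⁻ x in Q.set, ENNReal.ofReal (w x) ^ (1 - conj p)) ^ (p - 1)) := by
        exact mul_le_mul' (mul_le_mul' le_rfl h1) le_rfl
    _ = C * apE B' p w Q := by rw [aux_apE_eq hp]; ring
    _ ≤ C * apConst B' p w := mul_le_mul' le_rfl (aux_apE_le_apConst _ _ _ _)

lemma aux_apConst_congr {p : ℝ} (hp : 1 < p) (B : Matrix (Fin n) (Fin n) ℝ) (hB : B.det ≠ 0)
    {w W : (Fin n → ℝ) → ℝ} (he : w =ᵐ[(volume : Measure (Fin n → ℝ))] W) :
    apConst B p w = apConst B p W := by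
  have heB : ∀ᵐ x ∂(volume : Measure (Fin n → ℝ)), w (B.mulVec x) = W (B.mulVec x) :=
    (aux_qmp B hB).ae he
  refine iSup_congr fun Q => ?_
  rw [aux_apE_eq hp, aux_apE_eq hp]
  have e1 : (∫⁻ x in Q.set, ENNReal.ofReal (w (B.mulVec x)))
      = ∫⁻ x in Q.set, ENNReal.ofReal (W (B.mulVec x)) :=
    lintegral_congr_ae (ae_restrict_of_ae (heB.mono fun x hx => by simp only [hx]))
  have e2 : (∫⁻ x in Q.set, ENNReal.ofReal (w x) ^ (1 - conj p))
      = ∫⁻ x in Q.set, ENNReal.ofReal (W x) ^ (1 - conj p) :=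
    lintegral_congr_ae (ae_restrict_of_ae (he.mono fun x hx => by simp only [hx]))
  rw [e1, e2]

end Aux2
section Aux3

open Filter Metric

variable {n : ℕ}

noncomputable def auxGrow (Q : Cube n) (k : ℕ) : Cube n :=
  ⟨fun i => Q.corner i - k, Q.side + 2 * k, by have := Q.side_pos; positivity⟩

lemma auxGrow_subset (Q : Cube n) (k : ℕ) : Q.set ⊆ (auxGrow Q k).set := by
  intro x hx i
  obtain ⟨h1, h2⟩ := hx i
  have hk : (0:ℝ) ≤ k := Nat.cast_nonneg k
  constructor
  · show Q.corner i - k ≤ x i; linarith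
  · show x i < Q.corner i - k + (Q.side + 2 * k); linarith

lemma auxGrow_covers (Q : Cube n) (x : Fin n → ℝ) : ∃ k : ℕ, x ∈ (auxGrow Q k).set := by
  obtain ⟨k, hk⟩ := exists_nat_gt (‖x‖ + ‖Q.corner‖)
  refine ⟨k, fun i => ?_⟩
  have h1 : |x i| ≤ ‖x‖ := by simpa [Real.norm_eq_abs] using norm_le_pi_norm x i
  have h2 : |Q.corner i| ≤ ‖Q.corner‖ := by
    simpa [Real.norm_eq_abs] using norm_le_pi_norm Q.corner i
  obtain ⟨h1a, h1b⟩ := abs_le.mp h1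
  obtain ⟨h2a, h2b⟩ := abs_le.mp h2
  have hs := Q.side_pos
  constructor
  · show Q.corner i - k ≤ x i; linarith
  · show x i < Q.corner i - k + (Q.side + 2 * k); linarith

lemma aux_conj_gt_one {p : ℝ} (hp : 1 < p) : 1 < conj p := by
  rw [conj, lt_div_iff₀ (by linarith : (0:ℝ) < p - 1)]; linarith

lemma aux_pos_or_zero {p : ℝ} (hp : 1 < p) (B : Matrix (Fin n) (Fin n) ℝ) (hB : B.det ≠ 0)
    (W : (Fin n → ℝ) → ℝ) (hWm : Measurable W) (hW0 : ∀ x, 0 ≤ W x)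
    (hv : MemAp B p W) :
    (∀ᵐ x ∂(volume : Measure (Fin n → ℝ)), 0 < W x) ∨
      (∀ᵐ x ∂(volume : Measure (Fin n → ℝ)), W x = 0) := by
  have hconj : 1 - conj p < 0 := by have := aux_conj_gt_one hp; linarith
  set S := {x | W x = 0} with hSdef
  have hSm : MeasurableSet S := hWm (measurableSet_singleton 0)
  by_cases hS0 : volume S = 0
  · left
    have := measure_eq_zero_iff_ae_notMem.mp hS0
    filter_upwards [this] with x hx
    exact lt_of_le_of_ne (hW0 x) (Ne.symm hx)
  · right
    have hcover : ∃ Q : Cube n, volume (S ∩ Q.set) ≠ 0 := by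
      by_contra h
      push_neg at h
      apply hS0
      have hsub : S ⊆ ⋃ k : ℕ, S ∩ (auxGrow ⟨0, 1, one_pos⟩ k).set := fun x hx =>
        mem_iUnion.mpr ⟨(auxGrow_covers _ x).choose, hx, (auxGrow_covers _ x).choose_spec⟩
      exact measure_mono_null hsub (measure_iUnion_null fun k => h _)
    obtain ⟨Q₀, hQ₀⟩ := hcover
    have hν : ∀ k : ℕ, ∀ᵐ x ∂(volume.restrict (auxGrow Q₀ k).set), W (B.mulVec x) = 0 := by
      intro k
      set Q := auxGrow Q₀ k with hQdef
      have hcne : (ENNReal.ofReal Q.vol) ≠ 0 := by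
        simpa [ENNReal.ofReal_eq_zero, not_le] using Q.vol_pos
      have hcinv : (ENNReal.ofReal Q.vol)⁻¹ ≠ 0 := by
        simp [ENNReal.inv_ne_zero]
      have hσ : (∫⁻ x in Q.set, ENNReal.ofReal (W x) ^ (1 - conj p)) = ⊤ := by
        have hsub : S ∩ Q₀.set ⊆ Q.set := inter_subset_right.trans (auxGrow_subset Q₀ k)
        refine top_unique ?_
        calc (⊤:ℝ≥0∞) = ⊤ * volume (S ∩ Q₀.set) := by rw [ENNReal.top_mul hQ₀]
          _ = ∫⁻ _ in S ∩ Q₀.set, (⊤:ℝ≥0∞) := (setLIntegral_const _ _).symm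
          _ = ∫⁻ x in S ∩ Q₀.set, ENNReal.ofReal (W x) ^ (1 - conj p) := by
              refine setLIntegral_congr_fun (hSm.inter Q₀.measurableSet')
                (fun x hx => ?_)
              have hx0 : W x = 0 := hx.1
              rw [hx0]
              simp [ENNReal.zero_rpow_of_neg hconj]
          _ ≤ ∫⁻ x in Q.set, ENNReal.ofReal (W x) ^ (1 - conj p) :=
              lintegral_mono_set hsub
      have happ := (aux_apE_le_apConst B p W Q).trans_lt hv
      rw [aux_apE_eq hp, hσ] at happ
      have h2 : ((ENNReal.ofReal Q.vol)⁻¹ * (⊤:ℝ≥0∞)) ^ (p-1) = ⊤ := by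
        rw [ENNReal.mul_top hcinv]
        exact ENNReal.top_rpow_of_pos (by linarith)
      rw [h2] at happ
      have hF : ((ENNReal.ofReal Q.vol)⁻¹ * ∫⁻ x in Q.set, ENNReal.ofReal (W (B.mulVec x))) = 0 := by
        by_contra hF
        rw [ENNReal.mul_top hF] at happ
        exact lt_irrefl _ happ
      have hint : (∫⁻ x in Q.set, ENNReal.ofReal (W (B.mulVec x))) = 0 := by
        rcases mul_eq_zero.mp hF with h | h
        · exact absurd h hcinv
        · exact h
      have hmeas : Measurable fun x => ENNReal.ofReal (W (B.mulVec x)) :=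
        ENNReal.measurable_ofReal.comp (hWm.comp (aux_measurable_mulVec B))
      have := (lintegral_eq_zero_iff hmeas).mp hint
      filter_upwards [this] with x hx
      have hx' : W (B.mulVec x) ≤ 0 := ENNReal.ofReal_eq_zero.mp hx
      exact le_antisymm hx' (hW0 _)
    have hglob : ∀ᵐ x ∂(volume : Measure (Fin n → ℝ)), W (B.mulVec x) = 0 := by
      have hTm : MeasurableSet {x : Fin n → ℝ | ¬ W (B.mulVec x) = 0} :=
        ((hWm.comp (aux_measurable_mulVec B)) (measurableSet_singleton 0)).compl
      rw [ae_iff]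
      have hcov : {x : Fin n → ℝ | ¬ W (B.mulVec x) = 0} ⊆
          ⋃ k : ℕ, {x : Fin n → ℝ | ¬ W (B.mulVec x) = 0} ∩ (auxGrow Q₀ k).set := fun x hx =>
        mem_iUnion.mpr ⟨(auxGrow_covers _ x).choose, hx, (auxGrow_covers _ x).choose_spec⟩
      refine measure_mono_null hcov (measure_iUnion_null fun k => ?_)
      have := hν k
      rw [ae_iff] at this
      rwa [Measure.restrict_apply hTm] at this
    exact aux_ae_comp_inv B hB hglob

end Aux3
section Aux4

open Filter Metric

variable {n : ℕ}

lemma aux_key {p : ℝ} (hp : 1 < p) (B : Matrix (Fin n) (Fin n) ℝ) (hB : B.det ≠ 0)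
    (W : (Fin n → ℝ) → ℝ) (hWm : Measurable W) (hW0 : ∀ x, 0 ≤ W x)
    (hpos : ∀ᵐ x ∂(volume : Measure (Fin n → ℝ)), 0 < W x)
    (hv : MemAp B p W) :
    ∀ᵐ x ∂(volume : Measure (Fin n → ℝ)),
      ENNReal.ofReal (W (B.mulVec x)) ≤ apConst B p W * ENNReal.ofReal (W x) := by
  have hp1 : (0:ℝ) < p - 1 := by linarith
  have hposB : ∀ᵐ x ∂(volume : Measure (Fin n → ℝ)), 0 < W (B.mulVec x) :=
    (aux_qmp B hB).ae hpos
  set f1 : (Fin n → ℝ) → ℝ≥0∞ := fun x => ENNReal.ofReal (W (B.mulVec x)) with hf1def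
  set f2 : (Fin n → ℝ) → ℝ≥0∞ := fun x => ENNReal.ofReal (W x) ^ (1 - conj p) with hf2def
  have m1 : Measurable f1 := ENNReal.measurable_ofReal.comp (hWm.comp (aux_measurable_mulVec B))
  have m2 : Measurable f2 := (ENNReal.measurable_ofReal.comp hWm).pow_const _
  have hvne : apConst B p W ≠ ⊤ := hv.ne
  -- positivity and finiteness of integrals over cubes
  have hQfin : ∀ Q : Cube n,
      (∫⁻ x in Q.set, f1 x) < ⊤ ∧ (∫⁻ x in Q.set, f2 x) < ⊤ := by
    intro Q
    have hcne : (ENNReal.ofReal Q.vol) ≠ 0 := by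
      simpa [ENNReal.ofReal_eq_zero, not_le] using Q.vol_pos
    have hcnt : (ENNReal.ofReal Q.vol) ≠ ⊤ := ENNReal.ofReal_ne_top
    have hinv : (ENNReal.ofReal Q.vol)⁻¹ ≠ 0 := ENNReal.inv_ne_zero.mpr hcnt
    have hQne : volume.restrict Q.set ≠ 0 := by
      refine MeasureTheory.Measure.measure_univ_ne_zero.mp ?_
      rw [Measure.restrict_apply_univ, Q.volume_set']
      exact hcne
    haveI : (ae (volume.restrict Q.set)).NeBot := ae_neBot.mpr hQne
    have hposint : ∀ g : (Fin n → ℝ) → ℝ≥0∞, Measurable g →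
        (∀ᵐ x ∂(volume : Measure (Fin n → ℝ)), 0 < g x) → 0 < ∫⁻ x in Q.set, g x := by
      intro g hgm hg
      rw [pos_iff_ne_zero]
      intro h
      have h0 := (lintegral_eq_zero_iff hgm).mp h
      have hg' : ∀ᵐ x ∂(volume.restrict Q.set), 0 < g x := ae_restrict_of_ae hg
      obtain ⟨x, hx0, hxpos⟩ := (h0.and hg').exists
      rw [hx0] at hxpos
      exact lt_irrefl _ hxpos
    have h1pos : 0 < ∫⁻ x in Q.set, f1 x :=
      hposint f1 m1 (hposB.mono fun x hx => ENNReal.ofReal_pos.mpr hx)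
    have h2pos : 0 < ∫⁻ x in Q.set, f2 x := by
      refine hposint f2 m2 (hpos.mono fun x hx => ?_)
      show 0 < ENNReal.ofReal (W x) ^ (1 - conj p)
      rw [ENNReal.ofReal_rpow_of_pos hx]
      exact ENNReal.ofReal_pos.mpr (Real.rpow_pos_of_pos hx _)
    have happ := (aux_apE_le_apConst B p W Q).trans_lt hv
    rw [aux_apE_eq hp] at happ
    constructor
    · by_contra h
      push_neg at h
      have hI1 : (∫⁻ x in Q.set, f1 x) = ⊤ := top_unique h
      rw [hI1, ENNReal.mul_top hinv] at happ
      have h2ne : (((ENNReal.ofReal Q.vol)⁻¹ * ∫⁻ x in Q.set, f2 x) ^ (p - 1)) ≠ 0 := by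
        rw [Ne, ENNReal.rpow_eq_zero_iff]
        rintro (⟨h0, _⟩ | ⟨_, hneg⟩)
        · exact (mul_ne_zero hinv h2pos.ne') h0
        · linarith
      rw [ENNReal.top_mul h2ne] at happ
      exact lt_irrefl _ happ
    · by_contra h
      push_neg at h
      have hI2 : (∫⁻ x in Q.set, f2 x) = ⊤ := top_unique h
      rw [hI2, ENNReal.mul_top hinv, ENNReal.top_rpow_of_pos hp1] at happ
      have h1ne : ((ENNReal.ofReal Q.vol)⁻¹ * ∫⁻ x in Q.set, f1 x) ≠ 0 :=
        mul_ne_zero hinv h1pos.ne'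
      rw [ENNReal.mul_top h1ne] at happ
      exact lt_irrefl _ happ
  -- local finiteness of the two densities
  have hloc : ∀ f : (Fin n → ℝ) → ℝ≥0∞, Measurable f →
      (∀ Q : Cube n, (∫⁻ x in Q.set, f x) < ⊤) →
      IsLocallyFiniteMeasure (volume.withDensity f) := by
    intro f hf hfin
    refine ⟨fun x => ⟨ball x 1, ball_mem_nhds x one_pos, ?_⟩⟩
    set Q : Cube n := ⟨fun i => x i - 1, 2, two_pos⟩ with hQdef
    have hsub : ball x 1 ⊆ Q.set := by
      intro y hy i
      have hd : dist y x < 1 := mem_ball.mp hy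
      have hi : |y i - x i| < 1 := by
        have := (dist_le_pi_dist y x i).trans_lt hd
        rwa [Real.dist_eq] at this
      obtain ⟨ha, hb⟩ := abs_lt.mp hi
      constructor
      · show x i - 1 ≤ y i; linarith
      · show y i < x i - 1 + 2; linarith
    calc (volume.withDensity f) (ball x 1) ≤ (volume.withDensity f) Q.set :=
          measure_mono hsub
      _ = ∫⁻ y in Q.set, f y := withDensity_apply _ Q.measurableSet'
      _ < ⊤ := hfin Q
  set ρ₁ := (volume : Measure (Fin n → ℝ)).withDensity f1 with hρ₁def
  set ρ₂ := (volume : Measure (Fin n → ℝ)).withDensity f2 with hρ₂def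
  haveI i1 : IsLocallyFiniteMeasure ρ₁ := hloc f1 m1 fun Q => (hQfin Q).1
  haveI i2 : IsLocallyFiniteMeasure ρ₂ := hloc f2 m2 fun Q => (hQfin Q).2
  have hd1 := Besicovitch.ae_tendsto_rnDeriv ρ₁ volume
  have hd2 := Besicovitch.ae_tendsto_rnDeriv ρ₂ volume
  have hr1 : ρ₁.rnDeriv volume =ᵐ[(volume : Measure (Fin n → ℝ))] f1 :=
    Measure.rnDeriv_withDensity volume m1
  have hr2 : ρ₂.rnDeriv volume =ᵐ[(volume : Measure (Fin n → ℝ))] f2 :=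
    Measure.rnDeriv_withDensity volume m2
  filter_upwards [hd1, hd2, hr1, hr2, hpos] with x ht1 ht2 he1 he2 hx
  rw [he1] at ht1
  rw [he2] at ht2
  set t := ENNReal.ofReal (W x) with htdef
  have ht0 : t ≠ 0 := (ENNReal.ofReal_pos.mpr hx).ne'
  have htt : t ≠ ⊤ := ENNReal.ofReal_ne_top
  have hf2x : f2 x = ENNReal.ofReal ((W x) ^ (1 - conj p)) := by
    show ENNReal.ofReal (W x) ^ (1 - conj p) = _
    rw [ENNReal.ofReal_rpow_of_pos hx]
  have hf2t : f2 x ≠ ⊤ := by rw [hf2x]; exact ENNReal.ofReal_ne_top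
  have hf1t : f1 x ≠ ⊤ := ENNReal.ofReal_ne_top
  -- claim for every δ > 0
  have hclaim : ∀ δ : ℝ, 0 < δ →
      f1 x * (f2 x) ^ (p - 1) ≤ apConst B p W * (ENNReal.ofReal ((1+δ)^n)) ^ p := by
    intro δ hδ
    set k := ENNReal.ofReal ((1+δ)^n) with hkdef
    have hkne : k ≠ 0 := by
      simp only [hkdef, Ne, ENNReal.ofReal_eq_zero, not_le]; positivity
    have hknt : k ≠ ⊤ := ENNReal.ofReal_ne_top
    have hev : ∀ᶠ r in nhdsWithin (0:ℝ) (Set.Ioi 0),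
        (ρ₁ (closedBall x r) / volume (closedBall x r)) *
          (ρ₂ (closedBall x r) / volume (closedBall x r)) ^ (p - 1)
          ≤ apConst B p W * k ^ p := by
      refine eventually_mem_nhdsWithin.mono fun r hr => ?_
      have hr0 : (0:ℝ) < r := hr
      set Q : Cube n := ⟨fun i => x i - r, 2*r*(1+δ), by positivity⟩ with hQdef
      have hcne : (ENNReal.ofReal Q.vol) ≠ 0 := by
        simpa [ENNReal.ofReal_eq_zero, not_le] using Q.vol_pos
      have hcnt : (ENNReal.ofReal Q.vol) ≠ ⊤ := ENNReal.ofReal_ne_top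
      have hsub : closedBall x r ⊆ Q.set := by
        intro y hy i
        have hd : dist y x ≤ r := mem_closedBall.mp hy
        have hi : |y i - x i| ≤ r := by
          have := (dist_le_pi_dist y x i).trans hd
          rwa [Real.dist_eq] at this
        obtain ⟨ha, hb⟩ := abs_le.mp hi
        constructor
        · show x i - r ≤ y i; linarith
        · show y i < x i - r + 2*r*(1+δ); nlinarith
      have hμball : volume (closedBall x r) = ENNReal.ofReal ((2*r)^n) := by
        rw [Real.volume_pi_closedBall x hr0.le, Fintype.card_fin]
      have hQvol : Q.vol = (2*r)^n * (1+δ)^n := by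
        show (2*r*(1+δ))^n = _
        rw [mul_pow]
      have hratio : ∀ ρ : Measure (Fin n → ℝ),
          ρ (closedBall x r) / volume (closedBall x r)
            ≤ ((ENNReal.ofReal Q.vol)⁻¹ * ρ Q.set) * k := by
        intro ρ
        have hb0 : (ENNReal.ofReal ((2*r)^n)) ≠ 0 := by
          simp only [Ne, ENNReal.ofReal_eq_zero, not_le]; positivity
        have hbt : (ENNReal.ofReal ((2*r)^n)) ≠ ⊤ := ENNReal.ofReal_ne_top
        rw [hμball, div_eq_mul_inv]
        calc ρ (closedBall x r) * (ENNReal.ofReal ((2*r)^n))⁻¹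
            ≤ ρ Q.set * (ENNReal.ofReal ((2*r)^n))⁻¹ :=
              mul_le_mul' (measure_mono hsub) le_rfl
          _ = ((ENNReal.ofReal Q.vol)⁻¹ * ρ Q.set) *
              (ENNReal.ofReal Q.vol * (ENNReal.ofReal ((2*r)^n))⁻¹) := by
              calc ρ Q.set * (ENNReal.ofReal ((2*r)^n))⁻¹
                  = (((ENNReal.ofReal Q.vol)⁻¹ * ENNReal.ofReal Q.vol) * ρ Q.set) *
                    (ENNReal.ofReal ((2*r)^n))⁻¹ := by
                    rw [ENNReal.inv_mul_cancel hcne hcnt, one_mul]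
                _ = _ := by ring
          _ = ((ENNReal.ofReal Q.vol)⁻¹ * ρ Q.set) * k := by
              congr 1
              rw [hQvol, ENNReal.ofReal_mul (by positivity)]
              rw [mul_comm (ENNReal.ofReal ((2*r)^n)) (ENNReal.ofReal ((1+δ)^n)), mul_assoc,
                ENNReal.mul_inv_cancel hb0 hbt, mul_one]
      have happ : ((ENNReal.ofReal Q.vol)⁻¹ * ρ₁ Q.set) *
          (((ENNReal.ofReal Q.vol)⁻¹ * ρ₂ Q.set)) ^ (p-1) ≤ apConst B p W := by
        have e1 : ρ₁ Q.set = ∫⁻ y in Q.set, f1 y := withDensity_apply _ Q.measurableSet'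
        have e2 : ρ₂ Q.set = ∫⁻ y in Q.set, f2 y := withDensity_apply _ Q.measurableSet'
        rw [e1, e2, ← aux_apE_eq hp]
        exact aux_apE_le_apConst B p W Q
      calc (ρ₁ (closedBall x r) / volume (closedBall x r)) *
            (ρ₂ (closedBall x r) / volume (closedBall x r)) ^ (p - 1)
          ≤ (((ENNReal.ofReal Q.vol)⁻¹ * ρ₁ Q.set) * k) *
            ((((ENNReal.ofReal Q.vol)⁻¹ * ρ₂ Q.set) * k) ^ (p-1)) :=
            mul_le_mul' (hratio ρ₁) (ENNReal.rpow_le_rpow (hratio ρ₂) hp1.le)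
        _ = (((ENNReal.ofReal Q.vol)⁻¹ * ρ₁ Q.set) *
              (((ENNReal.ofReal Q.vol)⁻¹ * ρ₂ Q.set)) ^ (p-1)) * (k * k ^ (p-1)) := by
            rw [ENNReal.mul_rpow_of_nonneg _ _ hp1.le]
            ring
        _ = (((ENNReal.ofReal Q.vol)⁻¹ * ρ₁ Q.set) *
              (((ENNReal.ofReal Q.vol)⁻¹ * ρ₂ Q.set)) ^ (p-1)) * k ^ p := by
            congr 1
            rw [show k * k ^ (p-1) = k ^ (1:ℝ) * k ^ (p-1) by rw [ENNReal.rpow_one],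
              ← ENNReal.rpow_add _ _ hkne hknt]
            congr 1
            ring
        _ ≤ apConst B p W * k ^ p := mul_le_mul' happ le_rfl
    have hlim : Tendsto (fun r => (ρ₁ (closedBall x r) / volume (closedBall x r)) *
        (ρ₂ (closedBall x r) / volume (closedBall x r)) ^ (p - 1)) (nhdsWithin 0 (Set.Ioi 0))
        (nhds (f1 x * (f2 x) ^ (p - 1))) := by
      have h2' := ht2.ennrpow_const (p - 1)
      exact ENNReal.Tendsto.mul ht1 (Or.inr (ENNReal.rpow_ne_top_of_nonneg hp1.le hf2t))
        h2' (Or.inr hf1t)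
    exact le_of_tendsto hlim hev
  -- let δ → 0
  have hL : f1 x * (f2 x) ^ (p - 1) ≤ apConst B p W := by
    have h1 : Tendsto (fun δ : ℝ => (ENNReal.ofReal ((1+δ)^n)) ^ p)
        (nhdsWithin (0:ℝ) (Set.Ioi 0)) (nhds 1) := by
      have hr : Tendsto (fun δ : ℝ => ((1+δ)^n : ℝ)) (nhds 0) (nhds 1) := by
        have hc : Continuous fun δ : ℝ => ((1+δ)^n : ℝ) := by continuity
        simpa using hc.tendsto 0
      have h2 : Tendsto (fun δ : ℝ => ENNReal.ofReal ((1+δ)^n))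
          (nhdsWithin (0:ℝ) (Set.Ioi 0)) (nhds 1) := by
        have hm : Tendsto (fun δ : ℝ => ((1+δ)^n : ℝ)) (nhdsWithin (0:ℝ) (Set.Ioi 0))
            (nhds 1) := hr.mono_left nhdsWithin_le_nhds
        have := (ENNReal.continuous_ofReal.tendsto 1).comp hm
        simpa [Function.comp_def] using this
      have := h2.ennrpow_const p
      simpa [ENNReal.one_rpow] using this
    have hδlim : Tendsto (fun δ : ℝ => apConst B p W * (ENNReal.ofReal ((1+δ)^n)) ^ p)
        (nhdsWithin (0:ℝ) (Set.Ioi 0)) (nhds (apConst B p W)) := by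
      have := ENNReal.Tendsto.const_mul h1 (Or.inr hvne)
      simpa using this
    exact ge_of_tendsto hδlim (eventually_mem_nhdsWithin.mono fun δ hδ => hclaim δ hδ)
  have hf2pow : (f2 x) ^ (p - 1) = t⁻¹ := by
    show (ENNReal.ofReal (W x) ^ (1 - conj p)) ^ (p - 1) = _
    rw [← ENNReal.rpow_mul, aux_conj_lemma hp, ENNReal.rpow_neg_one]
  rw [hf2pow] at hL
  have hfin := mul_le_mul' hL (le_refl t)
  rwa [mul_assoc, ENNReal.inv_mul_cancel ht0 htt, mul_one] at hfin

end Aux4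
/-- `w ∈ 𝒜_{A,p} ∩ 𝒜_{A⁻¹,p}` iff `w` is a Muckenhoupt `A_p` weight
and `w_A ∼ w`. -/
theorem memAp_inter_iff (n : ℕ) (hn : 0 < n) (p : ℝ) (hp : 1 < p)
    (A : Matrix (Fin n) (Fin n) ℝ) (hA : A.det ≠ 0)
    (w : (Fin n → ℝ) → ℝ) (hw : ∀ x, 0 ≤ w x) (hwl : LocallyIntegrable w volume) :
    (MemAp A p w ∧ MemAp A⁻¹ p w) ↔
      (MemAp (1 : Matrix (Fin n) (Fin n) ℝ) p w ∧
        ∃ c1 c2 : ℝ, 0 < c1 ∧ c1 ≤ c2 ∧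
          ∀ᵐ x ∂(volume : Measure (Fin n → ℝ)),
            c1 * w x ≤ w (A.mulVec x) ∧ w (A.mulVec x) ≤ c2 * w x) := by
  have hp1 : (0:ℝ) < p - 1 := by linarith
  have hAu : IsUnit A.det := isUnit_iff_ne_zero.mpr hA
  have hAinv : (A⁻¹).det ≠ 0 := (Matrix.isUnit_nonsing_inv_det A hAu).ne_zero
  have hone : ((1 : Matrix (Fin n) (Fin n) ℝ)).det ≠ 0 := by simp
  obtain ⟨w', hw'm, hw'e⟩ : ∃ w' : (Fin n → ℝ) → ℝ, Measurable w' ∧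
      w =ᵐ[(volume : Measure (Fin n → ℝ))] w' := by
    have h := hwl.aestronglyMeasurable
    exact ⟨h.mk w, h.stronglyMeasurable_mk.measurable, h.ae_eq_mk⟩
  set W : (Fin n → ℝ) → ℝ := fun x => max (w' x) 0 with hWdef
  have hWm : Measurable W := hw'm.max measurable_const
  have hW0 : ∀ x, 0 ≤ W x := fun x => le_max_right _ _
  have he : w =ᵐ[(volume : Measure (Fin n → ℝ))] W := by
    filter_upwards [hw'e] with x hx
    show w x = max (w' x) 0
    rw [← hx]
    exact (max_eq_left (hw x)).symm
  have heA : ∀ᵐ x ∂(volume : Measure (Fin n → ℝ)), w (A.mulVec x) = W (A.mulVec x) :=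
    (aux_qmp A hA).ae he
  have hCA : apConst A p w = apConst A p W := aux_apConst_congr hp A hA he
  have hCAinv : apConst A⁻¹ p w = apConst A⁻¹ p W := aux_apConst_congr hp A⁻¹ hAinv he
  have hC1 : apConst 1 p w = apConst 1 p W := aux_apConst_congr hp 1 hone he
  constructor
  · rintro ⟨h1, h2⟩
    have h1' : MemAp A p W := by rwa [MemAp, ← hCA]
    have h2' : MemAp A⁻¹ p W := by rwa [MemAp, ← hCAinv]
    rcases aux_pos_or_zero hp A hA W hWm hW0 h1' with hpos | hzero
    · set v₁ := apConst A p W with hv₁def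
      set v₂ := apConst A⁻¹ p W with hv₂def
      have hv₁ : v₁ ≠ ⊤ := h1'.ne
      have hv₂ : v₂ ≠ ⊤ := h2'.ne
      have hkey1 := aux_key hp A hA W hWm hW0 hpos h1'
      have hkey2 := aux_key hp A⁻¹ hAinv W hWm hW0 hpos h2'
      have hb1 : ∀ᵐ x ∂(volume : Measure (Fin n → ℝ)),
          W (A.mulVec x) ≤ v₁.toReal * W x := by
        filter_upwards [hkey1] with x hx
        have h' : ENNReal.ofReal (W (A.mulVec x)) ≤ ENNReal.ofReal (v₁.toReal * W x) := by
          calc ENNReal.ofReal (W (A.mulVec x)) ≤ v₁ * ENNReal.ofReal (W x) := hx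
            _ = ENNReal.ofReal (v₁.toReal * W x) := by
                rw [ENNReal.ofReal_mul ENNReal.toReal_nonneg, ENNReal.ofReal_toReal hv₁]
        exact (ENNReal.ofReal_le_ofReal_iff
          (mul_nonneg ENNReal.toReal_nonneg (hW0 x))).mp h'
      have hb2 : ∀ᵐ x ∂(volume : Measure (Fin n → ℝ)),
          W (A⁻¹.mulVec x) ≤ v₂.toReal * W x := by
        filter_upwards [hkey2] with x hx
        have h' : ENNReal.ofReal (W (A⁻¹.mulVec x)) ≤ ENNReal.ofReal (v₂.toReal * W x) := by
          calc ENNReal.ofReal (W (A⁻¹.mulVec x)) ≤ v₂ * ENNReal.ofReal (W x) := hx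
            _ = ENNReal.ofReal (v₂.toReal * W x) := by
                rw [ENNReal.ofReal_mul ENNReal.toReal_nonneg, ENNReal.ofReal_toReal hv₂]
        exact (ENNReal.ofReal_le_ofReal_iff
          (mul_nonneg ENNReal.toReal_nonneg (hW0 x))).mp h'
      have hb2' : ∀ᵐ x ∂(volume : Measure (Fin n → ℝ)),
          W x ≤ v₂.toReal * W (A.mulVec x) := by
        have := (aux_qmp A hA).ae hb2
        filter_upwards [this] with x hx
        simpa [Matrix.mulVec_mulVec, Matrix.nonsing_inv_mul A hAu, Matrix.one_mulVec] using hx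
      haveI : (MeasureTheory.ae (volume : Measure (Fin n → ℝ))).NeBot := by
        refine ae_neBot.mpr (Measure.measure_univ_ne_zero.mp ?_)
        intro h0
        have hsubQ : (Cube.set ⟨0, 1, one_pos⟩ : Set (Fin n → ℝ)) ⊆ Set.univ :=
          Set.subset_univ _
        have := measure_mono_null hsubQ h0
        rw [Cube.volume_set'] at this
        simp [Cube.vol] at this
      have hv₂pos : 0 < v₂.toReal := by
        by_contra hcon
        push_neg at hcon
        obtain ⟨x, hx1, hx2⟩ := (hb2'.and hpos).exists
        nlinarith [hW0 (A.mulVec x)]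
      set c2 : ℝ := max v₁.toReal 1 with hc2def
      set c1 : ℝ := min (v₂.toReal)⁻¹ c2 with hc1def
      have hc1pos : 0 < c1 := lt_min (by positivity) (lt_of_lt_of_le one_pos (le_max_right _ _))
      have hc12 : c1 ≤ c2 := min_le_right _ _
      refine ⟨?_, c1, c2, hc1pos, hc12, ?_⟩
      · show apConst 1 p w < ⊤
        rw [hC1]
        have hmono : ∀ᵐ x ∂(volume : Measure (Fin n → ℝ)),
            ENNReal.ofReal (W ((1 : Matrix (Fin n) (Fin n) ℝ).mulVec x))
              ≤ ENNReal.ofReal v₂.toReal * ENNReal.ofReal (W (A.mulVec x)) := by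
          filter_upwards [hb2'] with x hx
          rw [Matrix.one_mulVec, ← ENNReal.ofReal_mul ENNReal.toReal_nonneg]
          exact ENNReal.ofReal_le_ofReal hx
        exact lt_of_le_of_lt (aux_apConst_mono hp 1 A W _ ENNReal.ofReal_ne_top hmono)
          (ENNReal.mul_lt_top ENNReal.ofReal_lt_top h1')
      · filter_upwards [hb1, hb2', he, heA] with x h1x h2x hex heAx
        rw [hex, heAx]
        constructor
        · calc c1 * W x ≤ (v₂.toReal)⁻¹ * W x :=
              mul_le_mul_of_nonneg_right (min_le_left _ _) (hW0 x)
            _ ≤ W (A.mulVec x) := by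
              rw [inv_mul_eq_div, div_le_iff₀' hv₂pos]
              exact h2x
        · calc W (A.mulVec x) ≤ v₁.toReal * W x := h1x
            _ ≤ c2 * W x := mul_le_mul_of_nonneg_right (le_max_left _ _) (hW0 x)
    · have hzA : ∀ᵐ x ∂(volume : Measure (Fin n → ℝ)), W (A.mulVec x) = 0 :=
        (aux_qmp A hA).ae hzero
      refine ⟨?_, 1, 1, one_pos, le_rfl, ?_⟩
      · show apConst 1 p w < ⊤
        rw [hC1]
        have hQ : ∀ Q : Cube n, apE 1 p W Q = 0 := by
          intro Q
          rw [aux_apE_eq hp]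
          have h0 : (∫⁻ x in Q.set, ENNReal.ofReal (W ((1 : Matrix (Fin n) (Fin n) ℝ).mulVec x))) = 0 := by
            have hae0 : ∀ᵐ x ∂(volume.restrict Q.set),
                ENNReal.ofReal (W ((1 : Matrix (Fin n) (Fin n) ℝ).mulVec x)) = 0 :=
              ae_restrict_of_ae (hzero.mono fun x hx => by
                rw [Matrix.one_mulVec, hx, ENNReal.ofReal_zero])
            rw [lintegral_congr_ae hae0, lintegral_zero]
          rw [h0, mul_zero, zero_mul]
        have hz : apConst 1 p W = 0 :=
          le_antisymm (iSup_le fun Q => (hQ Q).le) (zero_le)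
        rw [hz]
        exact ENNReal.zero_lt_top
      · filter_upwards [he, heA, hzero, hzA] with x hex heAx h0 h0A
        rw [hex, heAx, h0, h0A]
        norm_num
  · rintro ⟨h1, c1, c2, hc1, hc12, hae⟩
    have hc2 : (0:ℝ) < c2 := lt_of_lt_of_le hc1 hc12
    constructor
    · have hmono : ∀ᵐ x ∂(volume : Measure (Fin n → ℝ)), ENNReal.ofReal (w (A.mulVec x))
          ≤ ENNReal.ofReal c2 * ENNReal.ofReal (w ((1 : Matrix (Fin n) (Fin n) ℝ).mulVec x)) := by
        filter_upwards [hae] with x hx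
        rw [Matrix.one_mulVec, ← ENNReal.ofReal_mul hc2.le]
        exact ENNReal.ofReal_le_ofReal hx.2
      exact lt_of_le_of_lt (aux_apConst_mono hp A 1 w _ ENNReal.ofReal_ne_top hmono)
        (ENNReal.mul_lt_top ENNReal.ofReal_lt_top h1)
    · have hae' : ∀ᵐ x ∂(volume : Measure (Fin n → ℝ)), c1 * w (A⁻¹.mulVec x) ≤ w x := by
        have := (aux_qmp A⁻¹ hAinv).ae hae
        filter_upwards [this] with x hx
        have h' := hx.1
        simpa [Matrix.mulVec_mulVec, Matrix.mul_nonsing_inv A hAu, Matrix.one_mulVec] using h'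
      have hmono : ∀ᵐ x ∂(volume : Measure (Fin n → ℝ)), ENNReal.ofReal (w (A⁻¹.mulVec x))
          ≤ ENNReal.ofReal c1⁻¹ * ENNReal.ofReal (w ((1 : Matrix (Fin n) (Fin n) ℝ).mulVec x)) := by
        filter_upwards [hae'] with x hx
        rw [Matrix.one_mulVec, ← ENNReal.ofReal_mul (by positivity)]
        apply ENNReal.ofReal_le_ofReal
        rw [inv_mul_eq_div, le_div_iff₀ hc1, mul_comm]
        exact hx
      exact lt_of_le_of_lt (aux_apConst_mono hp A⁻¹ 1 w _ ENNReal.ofReal_ne_top hmono)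
        (ENNReal.mul_lt_top ENNReal.ofReal_lt_top h1)

end Paper
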